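/- There exists a rotation system ρ on the complete graph K_{17} with exactly 85 faces, of which 83 have length 3, one has length 6, and one has length 17, such that the dual graph of (K_{17}, ρ) is simple and the face of length 17 is a cutface. In particular the genus of (K_{17}, ρ) is 18 = γ(K_{17}) + 2. -/

import Mathlib

namespace DualSep

open SimpleGraph

variable {V : Type*} [Fintype V] [DecidableEq V]

/-- The dart-reversal permutation of a simple graph. -/
def dartRev (G : SimpleGraph V) : Equiv.Perm G.Dart :=
  Function.Involutive.toPerm SimpleGraph.Dart.symm SimpleGraph.Dart.symm_involutive

/-- `ρ` is a rotation system on `G`: it permutes the darts, preserves the initial vertex of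
each dart, and the darts leaving any fixed vertex form a single orbit. -/
structure IsRotationSystem (G : SimpleGraph V) (ρ : Equiv.Perm G.Dart) : Prop where
  fst_fixed : ∀ d : G.Dart, (ρ d).fst = d.fst
  single_orbit : ∀ d d' : G.Dart, d.fst = d'.fst → ∃ n : ℕ, (ρ ^ n) d = d'

/-- The face permutation `φ = ρ ∘ rev` of a rotation system. -/
def facePerm {G : SimpleGraph V} (ρ : Equiv.Perm G.Dart) : Equiv.Perm G.Dart :=
  ρ * dartRev G

/-- The face (orbit of the face permutation) containing a given dart. -/
def faceOf {G : SimpleGraph V} (ρ : Equiv.Perm G.Dart) (d : G.Dart) : Set G.Dart :=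
  {d' | (facePerm ρ).SameCycle d d'}

/-- The set of faces of `(G, ρ)`. -/
def faces {G : SimpleGraph V} (ρ : Equiv.Perm G.Dart) : Set (Set G.Dart) :=
  Set.range (faceOf ρ)

/-- The dual graph is simple: no dual edge joins a face to itself, and no two distinct
faces are joined by more than one dual edge. -/
def DualSimple {G : SimpleGraph V} (ρ : Equiv.Perm G.Dart) : Prop :=
  (∀ d : G.Dart, faceOf ρ d ≠ faceOf ρ d.symm) ∧
  (∀ d d' : G.Dart, d.edge ≠ d'.edge →
    ¬(faceOf ρ d = faceOf ρ d' ∧ faceOf ρ d.symm = faceOf ρ d'.symm) ∧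
    ¬(faceOf ρ d = faceOf ρ d'.symm ∧ faceOf ρ d.symm = faceOf ρ d'))

/-- The dual graph of `(G, ρ)`, as a simple graph on the set of faces: two distinct faces
are adjacent when some edge of `G` induces a dual edge between them. -/
def dualGraph {G : SimpleGraph V} (ρ : Equiv.Perm G.Dart) : SimpleGraph (faces ρ) where
  Adj F₁ F₂ := F₁ ≠ F₂ ∧
    ∃ d : G.Dart, faceOf ρ d = (F₁ : Set G.Dart) ∧ faceOf ρ d.symm = (F₂ : Set G.Dart)
  symm := by
    refine ⟨?_⟩
    rintro F₁ F₂ ⟨hne, d, h1, h2⟩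
    exact ⟨hne.symm, d.symm, h2, by rwa [SimpleGraph.Dart.symm_symm]⟩
  loopless := by refine ⟨?_⟩; rintro F ⟨hne, -⟩; exact hne rfl

/-- `C` is a cutface: a face whose removal disconnects the dual graph. -/
def IsCutface {G : SimpleGraph V} (ρ : Equiv.Perm G.Dart) (C : Set G.Dart) : Prop :=
  C ∈ faces ρ ∧
    ¬((dualGraph ρ).induce {F : faces ρ | (F : Set G.Dart) ≠ C}).Connected

end DualSep

namespace K17W
open SimpleGraph DualSep

def nf : Fin 17 → Fin 17 → Fin 17 :=
  ![![0, 4, 12, 13, 9, 16, 14, 10, 11, 7, 8, 5, 1, 15, 2, 6, 3], ![12, 1, 13, 11, 0, 10, 15, 14, 6, 2, 16, 9, 3, 8, 4, 5, 7], ![14, 9, 2, 6, 16, 15, 11, 13, 10, 4, 12, 7, 0, 1, 5, 3, 8], ![16, 12, 15, 3, 14, 4, 10, 2, 13, 5, 7, 1, 6, 0, 11, 8, 9], ![1, 14, 9, 5, 4, 7, 16, 11, 12, 0, 6, 8, 15, 10, 3, 13, 2], ![11, 15, 14, 9, 3, 5, 4, 12, 7, 8, 1, 13, 10, 6, 16,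 2, 0], ![15, 8, 5, 12, 10, 13, 6, 16, 9, 11, 3, 2, 14, 7, 0, 1, 4], ![9, 16, 11, 10, 3, 8, 13, 7, 14, 15, 0, 4, 5, 2, 1, 12, 6], ![10, 13, 16, 15, 11, 9, 1, 5, 8, 6, 2, 0, 4, 3, 7, 12, 14], ![4, 11, 1, 16, 2, 3, 8, 0, 5, 9, 14, 6, 15, 12, 13, 7, 10], ![7, 5, 8, 6, 13, 12, 4, 3, 0, 16, 10, 15, 2, 11, 9, 14, 1], ![8, 3, 6, 14, 7, 0, 9, 2, 4, 1, 13, 11, 16, 5, 12, 10, 15], ![2, 0, 10, 1, 8, 7, 3, 15, 9, 13, 5, 14, 12, 16, 6, 4, 11], ![3, 2, 7, 8, 15, 11, 5, 6, 1, 14, 4, 16, 9, 13, 10, 0, 12], ![6, 7, 0, 4, 1, 2, 12, 8, 16, 10, 15, 3, 13, 9, 14, 11, 5], ![13, 6, 5, 2, 12, 1, 0, 9, 3, 14, 11, 16, 7, 4, 10, 15, 8], ![5, 10, 4, 0, 6, 14, 7, 1, 2, 3, 15, 12, 13, 9, 8, 11, 16]]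

def pf : Fin 17 → Fin 17 → Fin 17 :=
  ![![0, 12, 14, 16, 1, 11, 15, 9, 10, 4, 7, 8, 2, 3, 6, 13, 5], ![4, 1, 9, 12, 14, 15, 8, 16, 13, 11, 5, 3, 0, 2, 7, 6, 10], ![12, 13, 2, 15, 9, 14, 3, 11, 16, 1, 8, 6, 10, 7, 0, 5, 4], ![13, 11, 7, 3, 5, 9, 12, 10, 15, 16, 6, 14, 1, 8, 4, 2, 0], ![9, 0, 16, 14, 4, 3, 10, 5, 11, 2, 13, 7, 8, 15, 1, 12, 6], ![16, 10, 15, 4, 6, 5, 13, 8, 9, 3, 12, 0, 7, 11, 2, 1, 14], ![14, 15, 11, 10, 16, 2, 6, 13, 1, 8, 4, 9, 3, 5, 12, 0, 7], ![10, 14, 13, 4, 11, 12, 16, 7, 5, 0, 3, 2, 15, 6, 8, 9, 1], ![11, 6, 10, 13, 12, 7, 9, 14, 8, 5, 0, 4, 15, 1, 16, 3, 2], ![7, 2, 4, 5, 0, 8, 11, 15, 6, 9, 16, 1, 13, 14, 10, 12, 3], ![8, 16, 12, 7, 6, 1, 3, 0, 2, 14, 10, 13, 5, 4, 15, 11, 9],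 ![5, 9, 7, 1, 8, 13, 2, 4, 0, 6, 15, 11, 14, 10, 3, 16, 12], ![1, 3, 0, 6, 15, 10, 14, 5, 4, 8, 2, 16, 12, 9, 11, 7, 13], ![15, 8, 1, 0, 10, 6, 7, 2, 3, 12, 14, 5, 16, 13, 9, 4, 11], ![2, 4, 5, 11, 3, 16, 0, 1, 7, 13, 9, 15, 6, 12, 14, 10, 8], ![6, 5, 3, 8, 13, 2, 1, 12, 16, 7, 14, 10, 4, 0, 9, 15, 11], ![3, 7, 8, 9, 2, 0, 4, 6, 14, 13, 1, 15, 11, 12, 5, 10, 16]]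

def ft : Fin 17 → Fin 17 → Fin 85 :=
  ![![0, 0, 1, 2, 3, 4, 5, 6, 7, 8, 9, 10, 11, 12, 13, 14, 15], ![3, 0, 16, 17, 18, 19, 20, 21, 22, 23, 24, 25, 0, 26, 27, 28, 29], ![11, 26, 0, 30, 31, 32, 33, 34, 35, 16, 36, 37, 38, 39, 1, 40, 41], ![12, 25, 33, 0, 42, 43, 44, 45, 46, 47, 48, 49, 17, 50, 51, 30, 2], ![8, 3, 41, 51, 0, 42, 52, 33, 53, 31, 54, 55, 56, 57, 18, 58, 59], ![15, 24, 40, 42, 33, 0, 60, 61, 62, 43, 63, 4, 64, 65, 32, 19, 66], ![13, 28, 37, 48, 59, 33, 0, 67, 20, 68, 52, 69, 44, 60, 70, 5, 71], ![9, 27, 39, 33, 55, 64, 71, 0, 61, 6, 45, 34, 72, 67, 73, 74, 21], ![10, 20, 36, 50, 56, 61, 68, 73, 0, 62, 7, 53, 75, 22, 76, 46, 35], ![6, 16, 31, 43, 8, 62, 69, 74, 68, 0, 75, 23, 77, 78, 79, 75, 47], ![7, 29, 38, 45, 52, 24, 48, 9, 36, 79, 0, 75, 63, 54, 80, 81, 75],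 ![4, 23, 34, 25, 53, 65, 37, 55, 10, 69, 81, 0, 75, 75, 49, 82, 83], ![0, 17, 11, 44, 58, 63, 70, 64, 56, 75, 38, 83, 0, 77, 75, 72, 84], ![14, 22, 26, 12, 54, 60, 67, 39, 50, 77, 75, 65, 84, 0, 78, 57, 75], ![1, 18, 32, 49, 51, 66, 13, 27, 73, 78, 79, 75, 70, 75, 0, 80, 76], ![5, 19, 30, 46, 57, 40, 28, 72, 75, 74, 80, 81, 58, 14, 75, 0, 82], ![2, 21, 35, 47, 41, 15, 59, 71, 76, 75, 29, 82, 83, 84, 66, 75, 0]]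

def repP : Fin 85 → Fin 17 × Fin 17 :=
  ![(0, 1), (0, 2), (0, 3), (0, 4), (0, 5), (0, 6), (0, 7), (0, 8), (0, 9), (0, 10), (0, 11), (0, 12), (0, 13), (0, 14), (0, 15), (0, 16), (1, 2), (1, 3), (1, 4), (1, 5), (1, 6), (1, 7), (1, 8), (1, 9), (1, 10), (1, 11), (1, 13), (1, 14), (1, 15), (1, 16), (2, 3), (2, 4), (2, 5), (2, 6), (2, 7), (2, 8), (2, 10), (2, 11), (2, 12), (2, 13), (2, 15), (2, 16), (3, 4), (3, 5), (3, 6), (3, 7), (3, 8), (3, 9), (3, 10), (3, 11), (3, 13), (3, 14), (4, 6), (4, 8), (4, 10), (4, 11), (4, 12), (4, 13), (4, 15), (4, 16), (5, 6), (5, 7), (5, 8), (5, 10), (5, 12), (5, 13), (5, 16), (6, 7), (6, 9), (6, 11), (6, 14), (6, 16), (7, 12), (7, 14), (7, 15), (8, 12), (8, 14), (9, 12), (9, 13), (9, 14), (10, 14), (10, 15), (11, 15), (11, 16), (12, 16)]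

def lenF : Fin 85 → Nat :=
  ![3, 3, 3, 3, 3, 3, 3, 3, 3, 3, 3, 3, 3, 3, 3, 3, 3, 3, 3, 3, 3, 3, 3, 3, 3, 3, 3, 3, 3, 3, 3, 3, 3, 6, 3, 3, 3, 3, 3, 3, 3, 3, 3, 3, 3, 3, 3, 3, 3, 3, 3, 3, 3, 3, 3, 3, 3, 3, 3, 3, 3, 3, 3, 3, 3, 3, 3, 3, 3, 3, 3, 3, 3, 3, 3, 17, 3, 3, 3, 3, 3, 3, 3, 3, 3]

def PB : Fin 85 → Bool :=
  ![false, false, false, false, false, false, false, false, false, false, false, false, false, false, false, false, false, false, false, false, false, false, false, false, false, false, false, false, false, false, false, false, false, false, false, false, false, false, false, false, false, false, false, false, false, false, false, false, false, false, false, false, false, false, false, false, false, false, false, false, false, false, false, false, false, false, false, false, false, false, false, false, false, false, false, false, false, true, true, true, true, true, true, true, true]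

def iC : Fin 85 := 75

def iB : Fin 85 := 78

def iA : Fin 85 := 0


set_option maxRecDepth 100000
set_option maxHeartbeats 4000000

def phiP (p : Fin 17 × Fin 17) : Fin 17 × Fin 17 := (p.2, nf p.2 p.1)

def faceListP (i : Fin 85) : List (Fin 17 × Fin 17) :=
  (List.range (lenF i)).map (fun n => phiP^[n] (repP i))

def keyInv (i j : Fin 85) : Fin 17 × Fin 17 :=
  ((faceListP i).filter (fun p => ft p.2 p.1 = j)).headI

theorem t1 : ∀ v u : Fin 17, u ≠ v → nf v u ≠ v := by decide
theorem t1p : ∀ v u : Fin 17, u ≠ v → pf v u ≠ v := by decide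
theorem t2 : ∀ v u : Fin 17, u ≠ v → pf v (nf v u) = u := by decide
theorem t2c : ∀ v u : Fin 17, u ≠ v → nf v (pf v u) = u := by decide
theorem t3 : ∀ u v : Fin 17, u ≠ v → ft v (nf v u) = ft u v := by decide
theorem t4 : ∀ i : Fin 85, (repP i).1 ≠ (repP i).2 := by decide
theorem t5 : ∀ i : Fin 85, ft (repP i).1 (repP i).2 = i := by decide
theorem t6 : ∀ u v : Fin 17, u ≠ v →
    ∃ n < lenF (ft u v), phiP^[n] (repP (ft u v)) = (u, v) := by decide
theorem t8 : ∀ i : Fin 85, (faceListP i).Nodup := by decide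
theorem t9 : ∀ u v : Fin 17, u ≠ v → keyInv (ft u v) (ft v u) = (u, v) := by decide
theorem t10 : ∀ u v : Fin 17, u ≠ v → ft u v ≠ ft v u := by decide
theorem t11 : ∀ u v : Fin 17, u ≠ v → ft u v ≠ iC → ft v u ≠ iC →
    PB (ft u v) = PB (ft v u) := by decide
theorem t12 : ∀ v u w : Fin 17, u ≠ v → w ≠ v →
    ∃ n < 16, (fun x => nf v x)^[n] u = w := by decide
theorem t13 : (Finset.univ.filter (fun i : Fin 85 => lenF i = 3)).card = 83 := by decide
theorem t14 : (Finset.univ.filter (fun i : Fin 85 => lenF i = 6)).card = 1 := by decide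
theorem t15 : (Finset.univ.filter (fun i : Fin 85 => lenF i = 17)).card = 1 := by decide
theorem t16 : lenF iC = 17 := by decide
theorem t17 : PB iB = true ∧ PB iA = false ∧ iB ≠ iC ∧ iA ≠ iC := by decide

abbrev D17 := (⊤ : SimpleGraph (Fin 17)).Dart

lemma dne (d : D17) : d.fst ≠ d.snd := (SimpleGraph.top_adj _ _).mp d.adj

def rho : Equiv.Perm D17 where
  toFun d := ⟨(d.fst, nf d.fst d.snd), (top_adj _ _).mpr (t1 d.fst d.snd (dne d).symm).symm⟩
  invFun d := ⟨(d.fst, pf d.fst d.snd), (top_adj _ _).mpr (t1p d.fst d.snd (dne d).symm).symm⟩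
  left_inv d := Dart.ext _ _ (Prod.ext rfl (t2 d.fst d.snd (dne d).symm))
  right_inv d := Dart.ext _ _ (Prod.ext rfl (t2c d.fst d.snd (dne d).symm))

lemma phi_toProd (d : D17) : (facePerm rho d).toProd = phiP d.toProd := rfl

lemma phi_iter (n : ℕ) (d : D17) :
    ((⇑(facePerm rho))^[n] d).toProd = phiP^[n] d.toProd := by
  induction n generalizing d with
  | zero => rfl
  | succ k ih =>
      rw [Function.iterate_succ_apply, Function.iterate_succ_apply, ih (facePerm rho d),
        phi_toProd]

lemma phi_pow (n : ℕ) (d : D17) :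
    (((facePerm rho) ^ n) d).toProd = phiP^[n] d.toProd := by
  have : ⇑((facePerm rho) ^ n) = (⇑(facePerm rho))^[n] := Equiv.Perm.coe_pow _ n
  rw [this]; exact phi_iter n d

def fidx (d : D17) : Fin 85 := ft d.fst d.snd

def repD (i : Fin 85) : D17 := ⟨repP i, (top_adj _ _).mpr (t4 i)⟩

lemma repD_toProd (i : Fin 85) : (repD i).toProd = repP i := rfl

lemma fidx_repD (i : Fin 85) : fidx (repD i) = i := t5 i

lemma fidx_phi (d : D17) : fidx (facePerm rho d) = fidx d := t3 d.fst d.snd (dne d)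

private lemma nat_inv {α β : Type*} (f : Equiv.Perm α) (g : α → β)
    (h : ∀ x, g (f x) = g x) : ∀ (n : ℕ) (x : α), g ((f ^ n) x) = g x := by
  intro n
  induction n with
  | zero => intro x; simp
  | succ k ih => intro x; rw [pow_succ, Equiv.Perm.mul_apply, ih, h]

private lemma zpow_inv {α β : Type*} (f : Equiv.Perm α) (g : α → β)
    (h : ∀ x, g (f x) = g x) : ∀ (n : ℤ) (x : α), g ((f ^ n) x) = g x := by
  have hinv : ∀ x, g (f⁻¹ x) = g x := by
    intro x
    conv_rhs => rw [← (show f (f⁻¹ x) = x from f.apply_symm_apply x)]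
    rw [h]
  intro n x
  cases n with
  | ofNat m => rw [Int.ofNat_eq_coe, zpow_natCast]; exact nat_inv f g h m x
  | negSucc m =>
      have := nat_inv f⁻¹ g hinv (m + 1) x
      rw [zpow_negSucc, ← inv_pow]
      exact this

lemma fidx_zpow (n : ℤ) (d : D17) : fidx ((facePerm rho ^ n) d) = fidx d :=
  zpow_inv _ _ fidx_phi n d

lemma reach (d : D17) : (facePerm rho).SameCycle (repD (fidx d)) d := by
  obtain ⟨n, _, he⟩ := t6 d.fst d.snd (dne d)
  refine ⟨(n : ℤ), ?_⟩
  rw [zpow_natCast]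
  apply Dart.ext
  rw [phi_pow, repD_toProd]
  exact he

lemma sc_iff (d d' : D17) : (facePerm rho).SameCycle d d' ↔ fidx d = fidx d' := by
  constructor
  · rintro ⟨n, rfl⟩
    exact (fidx_zpow n d).symm
  · intro h
    have h1 := reach d
    have h2 := reach d'
    rw [h] at h1
    exact h1.symm.trans h2

lemma faceOf_eq_iff (d d' : D17) : faceOf rho d = faceOf rho d' ↔ fidx d = fidx d' := by
  constructor
  · intro h
    have hd : d' ∈ faceOf rho d' := Equiv.Perm.SameCycle.refl _ d'
    rw [← h] at hd
    exact (sc_iff d d').mp hd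
  · intro h
    ext x
    simp only [faceOf, Set.mem_setOf_eq]
    exact ⟨fun hx => ((sc_iff d d').mpr h).symm.trans hx,
           fun hx => ((sc_iff d d').mpr h).trans hx⟩

def Phi (i : Fin 85) : Set D17 := faceOf rho (repD i)

lemma Phi_inj : Function.Injective Phi := by
  intro i j h
  have := (faceOf_eq_iff _ _).mp h
  rwa [fidx_repD, fidx_repD] at this

lemma faceOf_eq_Phi (d : D17) : faceOf rho d = Phi (fidx d) :=
  ((faceOf_eq_iff _ _).mpr (by rw [fidx_repD])).symm

lemma faces_eq : faces rho = Set.range Phi := by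
  ext F
  constructor
  · rintro ⟨d, rfl⟩; exact ⟨fidx d, (faceOf_eq_Phi d).symm⟩
  · rintro ⟨i, rfl⟩; exact ⟨repD i, rfl⟩

lemma faces_ncard : (faces rho).ncard = 85 := by
  rw [faces_eq, ← Set.image_univ, Set.ncard_image_of_injective _ Phi_inj, Set.ncard_univ]
  simp

def faceL (i : Fin 85) : List D17 :=
  (List.range (lenF i)).map (fun n => (⇑(facePerm rho))^[n] (repD i))

lemma faceL_map (i : Fin 85) : (faceL i).map Dart.toProd = faceListP i := by
  simp only [faceL, faceListP, List.map_map]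
  have : (Dart.toProd ∘ fun n => (⇑(facePerm rho))^[n] (repD i)) =
      fun n => phiP^[n] (repP i) := by
    funext n
    simp only [Function.comp_apply]
    rw [phi_iter, repD_toProd]
  rw [this]

lemma faceL_nodup (i : Fin 85) : (faceL i).Nodup := by
  have := t8 i
  rw [← faceL_map] at this
  exact this.of_map Dart.toProd

lemma Phi_eq_list (i : Fin 85) : Phi i = ↑(faceL i).toFinset := by
  ext d
  simp only [Phi, faceOf, Set.mem_setOf_eq, List.coe_toFinset, faceL, List.mem_map,
    List.mem_range]
  constructor
  · intro hsc
    have hf : fidx d = i := by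
      have := (sc_iff (repD i) d).mp hsc
      have h2 := (sc_iff (repD i) d).mp hsc
      rw [fidx_repD] at h2
      exact h2.symm
    obtain ⟨n, hn, he⟩ := t6 d.fst d.snd (dne d)
    refine ⟨n, ?_, ?_⟩
    · rw [show ft d.fst d.snd = fidx d from rfl, hf] at hn; exact hn
    · apply Dart.ext
      rw [phi_iter, repD_toProd]
      rw [show ft d.fst d.snd = fidx d from rfl, hf] at he
      exact he
  · rintro ⟨n, _, rfl⟩
    exact ⟨(n : ℤ), by rw [zpow_natCast]; rfl⟩

lemma Phi_ncard (i : Fin 85) : (Phi i).ncard = lenF i := by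
  rw [Phi_eq_list, Set.ncard_coe_finset, List.toFinset_card_of_nodup (faceL_nodup i)]
  simp [faceL]

lemma sep_eq (k : ℕ) : {F ∈ faces rho | F.ncard = k} = Phi '' {i | lenF i = k} := by
  ext F
  constructor
  · rintro ⟨hF, hc⟩
    rw [faces_eq] at hF
    obtain ⟨i, rfl⟩ := hF
    refine ⟨i, ?_, rfl⟩
    show lenF i = k
    rw [← Phi_ncard i]; exact hc
  · rintro ⟨i, hi, rfl⟩
    exact ⟨by rw [faces_eq]; exact ⟨i, rfl⟩, by rw [Phi_ncard]; exact hi⟩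

lemma count_k (k : ℕ) (c : ℕ)
    (h : (Finset.univ.filter (fun i : Fin 85 => lenF i = k)).card = c) :
    {F ∈ faces rho | F.ncard = k}.ncard = c := by
  classical
  rw [sep_eq, Set.ncard_image_of_injective _ Phi_inj, ← h,
    Set.ncard_eq_toFinset_card']
  congr 1
  ext i
  simp

lemma inj2 (d d' : D17) (h1 : fidx d = fidx d') (h2 : fidx d.symm = fidx d'.symm) :
    d = d' := by
  apply Dart.ext
  have e1 := t9 d.fst d.snd (dne d)
  have e2 := t9 d'.fst d'.snd (dne d')
  calc d.toProd = keyInv (fidx d) (fidx d.symm) := e1.symm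
    _ = keyInv (fidx d') (fidx d'.symm) := by rw [h1, h2]
    _ = d'.toProd := e2

lemma dual_simple : DualSimple rho := by
  constructor
  · intro d h
    exact t10 d.fst d.snd (dne d) ((faceOf_eq_iff _ _).mp h)
  · intro d d' hedge
    constructor
    · rintro ⟨h1, h2⟩
      apply hedge
      rw [inj2 d d' ((faceOf_eq_iff _ _).mp h1) ((faceOf_eq_iff _ _).mp h2)]
    · rintro ⟨h1, h2⟩
      apply hedge
      have h2' : fidx d.symm = fidx d'.symm.symm := by
        rw [Dart.symm_symm]; exact (faceOf_eq_iff _ _).mp h2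
      rw [inj2 d d'.symm ((faceOf_eq_iff _ _).mp h1) h2', Dart.edge_symm]

lemma rho_iter (n : ℕ) (d : D17) :
    ((⇑rho)^[n] d).toProd = (d.fst, (fun x => nf d.fst x)^[n] d.snd) := by
  induction n generalizing d with
  | zero => rfl
  | succ k ih =>
      rw [Function.iterate_succ_apply, ih (rho d), Function.iterate_succ_apply]
      rfl

lemma rot_sys : IsRotationSystem ⊤ rho := by
  constructor
  · intro d; rfl
  · intro d d' h
    obtain ⟨n, _, he⟩ := t12 d.fst d.snd d'.snd (dne d).symm (by rw [h]; exact (dne d').symm)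
    refine ⟨n, Dart.ext _ _ ?_⟩
    have hc : ⇑(rho ^ n) = (⇑rho)^[n] := Equiv.Perm.coe_pow _ n
    rw [hc, rho_iter]
    exact Prod.ext h he

lemma cut : ¬ ((dualGraph rho).induce
    {F : ↑(faces rho) | (F : Set D17) ≠ Phi iC}).Connected := by
  intro hconn
  classical
  have hmem : ∀ x : ↑{F : ↑(faces rho) | (F : Set D17) ≠ Phi iC},
      ∃ d, faceOf rho d = (x.1 : Set D17) := fun x => x.1.2
  let pick := fun x => (hmem x).choose
  have hpick : ∀ x, faceOf rho (pick x) = (x.1 : Set D17) := fun x => (hmem x).choose_spec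
  let Q := fun x => PB (fidx (pick x))
  have hQadj : ∀ x y, ((dualGraph rho).induce _).Adj x y → Q x = Q y := by
    intro x y hxy
    obtain ⟨hne, d, h1, h2⟩ := hxy
    have hx : fidx (pick x) = fidx d :=
      (faceOf_eq_iff _ _).mp (by rw [hpick x]; exact h1.symm)
    have hy : fidx (pick y) = fidx d.symm :=
      (faceOf_eq_iff _ _).mp (by rw [hpick y]; exact h2.symm)
    have hdC : fidx d ≠ iC := by
      intro hc
      apply x.2
      have h1' := h1
      rw [faceOf_eq_Phi d, hc] at h1'
      exact h1'.symm
    have hdC' : fidx d.symm ≠ iC := by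
      intro hc
      apply y.2
      have h2' := h2
      rw [faceOf_eq_Phi d.symm, hc] at h2'
      exact h2'.symm
    show PB (fidx (pick x)) = PB (fidx (pick y))
    rw [hx, hy]
    exact t11 d.fst d.snd (dne d) hdC hdC'
  have hwalk : ∀ (x y) (_ : ((dualGraph rho).induce _).Walk x y), Q x = Q y := by
    intro x y w
    induction w with
    | nil => rfl
    | cons h p ih => exact (hQadj _ _ h).trans ih
  have hBfaces : Phi iB ∈ faces rho := by rw [faces_eq]; exact ⟨iB, rfl⟩
  have hAfaces : Phi iA ∈ faces rho := by rw [faces_eq]; exact ⟨iA, rfl⟩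
  have hBne : (⟨Phi iB, hBfaces⟩ : ↑(faces rho)) ∈
      {F : ↑(faces rho) | (F : Set D17) ≠ Phi iC} :=
    fun h => t17.2.2.1 (Phi_inj h)
  have hAne : (⟨Phi iA, hAfaces⟩ : ↑(faces rho)) ∈
      {F : ↑(faces rho) | (F : Set D17) ≠ Phi iC} :=
    fun h => t17.2.2.2 (Phi_inj h)
  obtain ⟨w⟩ := hconn.preconnected ⟨_, hBne⟩ ⟨_, hAne⟩
  have hQ := hwalk _ _ w
  have hQB : Q ⟨_, hBne⟩ = PB iB := by
    show PB (fidx (pick _)) = PB iB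
    congr 1
    have h := (faceOf_eq_iff (pick ⟨_, hBne⟩) (repD iB)).mp (hpick ⟨_, hBne⟩)
    rwa [fidx_repD] at h
  have hQA : Q ⟨_, hAne⟩ = PB iA := by
    show PB (fidx (pick _)) = PB iA
    congr 1
    have h := (faceOf_eq_iff (pick ⟨_, hAne⟩) (repD iA)).mp (hpick ⟨_, hAne⟩)
    rwa [fidx_repD] at h
  rw [hQB, hQA] at hQ
  rw [t17.1, t17.2.1] at hQ
  exact absurd hQ (by simp)

lemma edge_count : ((⊤ : SimpleGraph (Fin 17)).edgeSet.ncard : ℤ) = 136 := by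
  classical
  rw [← SimpleGraph.coe_edgeFinset, Set.ncard_coe_finset,
    SimpleGraph.card_edgeFinset_top_eq_card_choose_two]
  have h : Nat.choose (Fintype.card (Fin 17)) 2 = 136 := by decide
  rw [h]
  norm_num

end K17W



open DualSep in
/-- There is a rotation system on `K_{17}` with 85 faces of the stated lengths, simple
dual, whose face of length 17 is a cutface; its genus is 18 = γ(K_{17}) + 2. -/
theorem stmt_K17 :
    ∃ ρ : Equiv.Perm (⊤ : SimpleGraph (Fin 17)).Dart,
      IsRotationSystem ⊤ ρ ∧
      (faces ρ).ncard = 85 ∧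
      {F ∈ faces ρ | F.ncard = 3}.ncard = 83 ∧
      {F ∈ faces ρ | F.ncard = 6}.ncard = 1 ∧
      {F ∈ faces ρ | F.ncard = 17}.ncard = 1 ∧
      DualSimple ρ ∧
      (∃ C ∈ faces ρ, C.ncard = 17 ∧ IsCutface ρ C) ∧
      ((Fintype.card (Fin 17) : ℤ) - ((⊤ : SimpleGraph (Fin 17)).edgeSet.ncard : ℤ)
          + ((faces ρ).ncard : ℤ) = 2 - 2 * 18) := by
  
  refine ⟨K17W.rho, K17W.rot_sys, K17W.faces_ncard, K17W.count_k 3 83 K17W.t13,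
    K17W.count_k 6 1 K17W.t14, K17W.count_k 17 1 K17W.t15, K17W.dual_simple,
    ⟨K17W.Phi K17W.iC, ?_, ?_, ?_, K17W.cut⟩, ?_⟩
  · rw [K17W.faces_eq]; exact ⟨K17W.iC, rfl⟩
  · rw [K17W.Phi_ncard, K17W.t16]
  · rw [K17W.faces_eq]; exact ⟨K17W.iC, rfl⟩
  · rw [K17W.faces_ncard, K17W.edge_count]
    norm_num
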